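/- Let ε > 0 and T > 0. Let ū : [0,T] × [-1,1] → ℝ be such that ū, ∂tū, ∂xū, ∂x²ū and ∂t∂xū exist and are jointly continuous, with ū(t,±1) = ∂xū(t,±1) = 0 and ū(t,x) > -1 for all (t,x). Let D := { (t,x,z) : t ∈ [0,T], (x,z) ∈ closure(Ω(ū(t,·))) } and let ψ : D → ℝ extend to a twice continuously differentiable function on an open neighborhood of D in ℝ³, such that for each t ∈ [0,T], ψ(t,·,·) satisfies ε²∂x²ψ + ∂z²ψ = 0 in Ω(ū(t,·)) and ψ(t,x,z) = (1+z)/(1+ū(t,x)) for (x,z) ∈ ∂Ω(ū(t,·)). Define E_e(t) := ∫_{Ω(ū(t,·))} ( ε²|∂xψ(t,x,z)|² + |∂zψ(t,x,z)|² ) d(x,z). Then for all 0 ≤ t₁ ≤ t₂ ≤ T: E_e(t₂) − E_e(t₁) = − ∫_{t₁}^{t₂} ∫_{-1}^{1} ( ε² |∂xψ(s,x,ū(s,x))|² + |∂zψ(s,x,ū(s,x))|² ) ∂tū(s,x) dx ds. -/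

import Mathlib

open MeasureTheory Set

/-- The domain `Ω(v) = {(x,z) : -1 < x < 1, -1 < z < v(x)}`. -/
def Omega (v : ℝ → ℝ) : Set (ℝ × ℝ) :=
  {p | p.1 ∈ Ioo (-1 : ℝ) 1 ∧ p.2 ∈ Ioo (-1 : ℝ) (v p.1)}

/-- Partial derivative of a curried two-variable function with respect to the
first variable. -/
noncomputable def pdx (f : ℝ → ℝ → ℝ) (x z : ℝ) : ℝ := deriv (fun x' => f x' z) x

/-- Partial derivative of a curried two-variable function with respect to the
second variable. -/
noncomputable def pdz (f : ℝ → ℝ → ℝ) (x z : ℝ) : ℝ := deriv (f x) z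

/-- The electrostatic energy
`E_e = ∫_{Ω(v)} ( ε²|∂xψ|² + |∂zψ|² )` of a potential `ψ` on `Ω(v)`. -/
noncomputable def Ee (ε : ℝ) (v : ℝ → ℝ) (ψ : ℝ → ℝ → ℝ) : ℝ :=
  ∫ p in Omega v, (ε ^ 2 * (pdx ψ p.1 p.2) ^ 2 + (pdz ψ p.1 p.2) ^ 2)

/-- Leibniz rule: differentiation of a parametric interval integral with moving
upper endpoint. -/
lemma leibniz_aux {f f' : ℝ → ℝ → ℝ}
    (hf : Continuous fun p : ℝ × ℝ => f p.1 p.2)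
    (hf' : Continuous fun p : ℝ × ℝ => f' p.1 p.2)
    (hd : ∀ t z, HasDerivAt (fun t' => f t' z) (f' t z) t)
    {a : ℝ → ℝ} {a' t₀ : ℝ} (ha : HasDerivAt a a' t₀) (c : ℝ) :
    HasDerivAt (fun t => ∫ z in c..a t, f t z)
      (f t₀ (a t₀) * a' + ∫ z in c..a t₀, f' t₀ z) t₀ := by
  have hft : ∀ t, Continuous (f t) := fun t => hf.comp (Continuous.prodMk_right t)
  have hft' : ∀ t, Continuous (f' t) := fun t => hf'.comp (Continuous.prodMk_right t)
  have hint : ∀ t u v : ℝ, IntervalIntegrable (f t) volume u v := fun t u v =>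
    (hft t).intervalIntegrable u v
  -- decomposition
  have hdecomp : ∀ t : ℝ, (∫ z in c..a t, f t z) =
      (∫ z in c..a t₀, f t z) + (∫ z in a t₀..a t, f t₀ z)
        + ∫ z in a t₀..a t, (f t z - f t₀ z) := by
    intro t
    have h1 : (∫ z in c..a t₀, f t z) + (∫ z in a t₀..a t, f t z)
        = ∫ z in c..a t, f t z :=
      intervalIntegral.integral_add_adjacent_intervals (hint t c (a t₀)) (hint t (a t₀) (a t))
    have h2 : (∫ z in a t₀..a t, f t z) =
        (∫ z in a t₀..a t, f t₀ z) + ∫ z in a t₀..a t, (f t z - f t₀ z) := by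
      rw [← intervalIntegral.integral_add (hint t₀ _ _) ((hint t _ _).sub (hint t₀ _ _))]
      congr 1; ext z; ring
    rw [← h1, h2, add_assoc]
  -- term 1 : dominated differentiation with fixed endpoints
  have ht1 : HasDerivAt (fun t => ∫ z in c..a t₀, f t z)
      (∫ z in c..a t₀, f' t₀ z) t₀ := by
    obtain ⟨C, hC⟩ := (isCompact_Icc.prod isCompact_uIcc :
        IsCompact (Icc (t₀ - 1) (t₀ + 1) ×ˢ uIcc c (a t₀))).exists_bound_of_continuousOn
      hf'.continuousOn
    refine (intervalIntegral.hasDerivAt_integral_of_dominated_loc_of_deriv_le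
      (F := f) (F' := f') (bound := fun _ => C) (Metric.ball_mem_nhds _ one_pos) ?_ ?_ ?_ ?_ ?_ ?_).2
    · exact Filter.Eventually.of_forall fun t => ((hft t).aestronglyMeasurable).restrict
    · exact hint t₀ c (a t₀)
    · exact ((hft' t₀).aestronglyMeasurable).restrict
    · refine Filter.Eventually.of_forall fun z hz t ht => ?_
      have hmem : (t, z) ∈ Icc (t₀ - 1) (t₀ + 1) ×ˢ uIcc c (a t₀) := by
        constructor
        · have := Metric.mem_ball.1 ht
          rw [Real.dist_eq] at this
          constructor <;> [linarith [abs_lt.1 this |>.1]; linarith [abs_lt.1 this |>.2]]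
        · exact uIoc_subset_uIcc hz
      simpa using hC _ hmem
    · exact intervalIntegrable_const
    · exact Filter.Eventually.of_forall fun z _ t _ => hd t z
  -- term 2 : fundamental theorem of calculus composed with `a`
  have ht2 : HasDerivAt (fun t => ∫ z in a t₀..a t, f t₀ z)
      (f t₀ (a t₀) * a') t₀ := by
    have h0 : HasDerivAt (fun b => ∫ z in a t₀..b, f t₀ z) (f t₀ (a t₀)) (a t₀) :=
      intervalIntegral.integral_hasDerivAt_right (hint t₀ _ _)
        ((hft t₀).stronglyMeasurableAtFilter _ _) (hft t₀).continuousAt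
    exact HasDerivAt.comp t₀ h0 ha
  -- term 3 : the error term is o(t - t₀)
  have ht3 : HasDerivAt (fun t => ∫ z in a t₀..a t, (f t z - f t₀ z)) 0 t₀ := by
    rw [hasDerivAt_iff_isLittleO]
    simp only [intervalIntegral.integral_same, sub_zero, smul_zero, sub_self, sub_zero]
    have hO : (fun t => a t - a t₀) =O[nhds t₀] fun t => t - t₀ := ha.isBigO_sub
    refine Asymptotics.IsLittleO.trans_isBigO ?_ hO
    rw [Asymptotics.isLittleO_iff]
    intro ε hε
    obtain ⟨v, hv_mem, hv⟩ := IsCompact.mem_uniformity_of_prod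
      (isCompact_Icc : IsCompact (Icc (a t₀ - 1) (a t₀ + 1)))
      (f := fun t z => f t z - f t₀ z) (s := (univ : Set ℝ)) (q := t₀)
      (by exact ((hf.comp (continuous_fst.prodMk continuous_snd)).sub
        (hf.comp (continuous_const.prodMk continuous_snd))).continuousOn)
      (mem_univ t₀) (Metric.dist_mem_uniformity hε)
    rw [nhdsWithin_univ] at hv_mem
    have hae : ∀ᶠ t in nhds t₀, a t ∈ Icc (a t₀ - 1) (a t₀ + 1) := by
      have := ha.continuousAt.tendsto
      have h2 : Icc (a t₀ - 1) (a t₀ + 1) ∈ nhds (a t₀) :=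
        Icc_mem_nhds (by linarith) (by linarith)
      exact this h2
    filter_upwards [hv_mem, hae] with t htv hta
    have hsub : Set.uIoc (a t₀) (a t) ⊆ Icc (a t₀ - 1) (a t₀ + 1) := by
      refine uIoc_subset_uIcc.trans (uIcc_subset_Icc ?_ hta)
      constructor <;> linarith
    have hb : ∀ z ∈ Set.uIoc (a t₀) (a t), ‖f t z - f t₀ z‖ ≤ ε := by
      intro z hz
      have h0 := hv t htv z (hsub hz)
      simp only [mem_setOf_eq, Real.dist_eq, sub_self, sub_zero] at h0
      simpa [Real.norm_eq_abs] using h0.le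
    calc ‖∫ z in a t₀..a t, (f t z - f t₀ z)‖
        ≤ ε * |a t - a t₀| :=
          intervalIntegral.norm_integral_le_of_norm_le_const hb
      _ = ε * ‖a t - a t₀‖ := by rw [Real.norm_eq_abs]
  -- combine
  have := (ht1.add ht2).add ht3
  have heq : (fun t => ((∫ z in c..a t₀, f t z) + (∫ z in a t₀..a t, f t₀ z))
      + ∫ z in a t₀..a t, (f t z - f t₀ z)) = fun t => ∫ z in c..a t, f t z := by
    funext t; rw [hdecomp t]
  rw [show ((fun t => ∫ z in c..a t₀, f t z) + (fun t => ∫ z in a t₀..a t, f t₀ z))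
      + (fun t => ∫ z in a t₀..a t, (f t z - f t₀ z)) = fun t => ∫ z in c..a t, f t z from heq] at this
  exact this.congr_deriv (by ring)


lemma isOpen_Omega {v : ℝ → ℝ} (hv : Continuous v) : IsOpen (Omega v) := by
  have : Omega v = ({p : ℝ × ℝ | -1 < p.1} ∩ {p : ℝ × ℝ | p.1 < 1})
      ∩ ({p : ℝ × ℝ | -1 < p.2} ∩ {p : ℝ × ℝ | p.2 < v p.1}) := by
    ext p
    simp only [Omega, mem_setOf_eq, mem_Ioo, mem_inter_iff]
  rw [this]
  exact ((isOpen_lt continuous_const continuous_fst).inter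
    (isOpen_lt continuous_fst continuous_const)).inter
    ((isOpen_lt continuous_const continuous_snd).inter
    (isOpen_lt continuous_snd (hv.comp continuous_fst)))

lemma mem_closure_Omega {v : ℝ → ℝ} (hv : Continuous v)
    (hv1 : ∀ x ∈ Icc (-1:ℝ) 1, -1 < v x)
    {x z : ℝ} (hx : x ∈ Icc (-1:ℝ) 1) (hz : z ∈ Icc (-1) (v x)) :
    (x, z) ∈ closure (Omega v) := by
  set θ : ℕ → ℝ := fun n => 1 / (n + 2) with hθ
  have hθpos : ∀ n, 0 < θ n := fun n => by positivity
  have hθlt : ∀ n, θ n ≤ 1 / 2 := by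
    intro n
    rw [hθ]
    apply div_le_div_of_nonneg_left one_pos.le two_pos
    linarith [Nat.cast_nonneg (α := ℝ) n]
  have hθ0 : Filter.Tendsto θ Filter.atTop (nhds 0) := by
    rw [hθ]
    have h1 : Filter.Tendsto (fun n : ℕ => ((n : ℝ) + 2)) Filter.atTop Filter.atTop := by
      apply Filter.tendsto_atTop_add_const_right
      exact tendsto_natCast_atTop_atTop
    simp only [one_div]; exact h1.inv_tendsto_atTop
  set xs : ℕ → ℝ := fun n => x * (1 - θ n) with hxs
  have hxs_mem : ∀ n, xs n ∈ Ioo (-1:ℝ) 1 := by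
    intro n
    have h1 : |xs n| < 1 := by
      rw [hxs]
      simp only [abs_mul]
      have hx1 : |x| ≤ 1 := abs_le.2 ⟨hx.1, hx.2⟩
      have h2 : |1 - θ n| < 1 := by
        rw [abs_lt]; constructor <;> [linarith [hθlt n]; linarith [hθpos n]]
      calc |x| * |1 - θ n| ≤ 1 * |1 - θ n| := by
            apply mul_le_mul_of_nonneg_right hx1 (abs_nonneg _)
        _ < 1 := by rwa [one_mul]
    exact ⟨(abs_lt.1 h1).1, (abs_lt.1 h1).2⟩
  have hxs_tend : Filter.Tendsto xs Filter.atTop (nhds x) := by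
    rw [hxs]
    have : Filter.Tendsto (fun n => x * (1 - θ n)) Filter.atTop (nhds (x * (1 - 0))) :=
      (tendsto_const_nhds.mul (tendsto_const_nhds.sub hθ0))
    simpa using this
  have hvxs : Filter.Tendsto (fun n => v (xs n)) Filter.atTop (nhds (v x)) :=
    (hv.continuousAt.tendsto).comp hxs_tend
  set δ : ℕ → ℝ := fun n => min (θ n) ((v (xs n) + 1) / 2) with hδ
  have hδpos : ∀ n, 0 < δ n := fun n =>
    lt_min (hθpos n) (by linarith [hv1 (xs n) (Ioo_subset_Icc_self (hxs_mem n))])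
  have hδ0 : Filter.Tendsto δ Filter.atTop (nhds 0) := by
    have : Filter.Tendsto δ Filter.atTop (nhds (min 0 ((v x + 1) / 2))) :=
      hθ0.min ((hvxs.add tendsto_const_nhds).div_const 2)
    have h0 : min (0:ℝ) ((v x + 1) / 2) = 0 := by
      apply min_eq_left
      linarith [hv1 x hx]
    rwa [h0] at this
  set zs : ℕ → ℝ := fun n => max (min z (v (xs n) - δ n)) (-1 + δ n) with hzs
  have hmem : ∀ n, (xs n, zs n) ∈ Omega v := by
    intro n
    refine ⟨hxs_mem n, ?_, ?_⟩
    · have : -1 < -1 + δ n := by linarith [hδpos n]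
      exact lt_of_lt_of_le this (le_max_right _ _)
    · rw [hzs]
      apply max_lt
      · exact lt_of_le_of_lt (min_le_right _ _) (by linarith [hδpos n])
      · have : δ n ≤ (v (xs n) + 1) / 2 := min_le_right _ _
        have h2 := hv1 (xs n) (Ioo_subset_Icc_self (hxs_mem n))
        linarith
  have hzs_tend : Filter.Tendsto zs Filter.atTop (nhds z) := by
    have : Filter.Tendsto zs Filter.atTop
        (nhds (max (min z (v x - 0)) (-1 + 0))) :=
      ((tendsto_const_nhds.min (hvxs.sub hδ0)).max (tendsto_const_nhds.add hδ0))
    have h0 : max (min z (v x - 0)) (-1 + 0) = z := by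
      rw [sub_zero, add_zero, min_eq_left hz.2, max_eq_left hz.1]
    rwa [h0] at this
  exact mem_closure_of_tendsto (hxs_tend.prodMk_nhds hzs_tend)
    (Filter.Eventually.of_forall hmem)

lemma mem_frontier_Omega {v : ℝ → ℝ} (hv : Continuous v)
    (hv1 : ∀ x ∈ Icc (-1:ℝ) 1, -1 < v x)
    {x z : ℝ} (hx : x ∈ Icc (-1:ℝ) 1) (hz : z ∈ Icc (-1) (v x))
    (hbd : z = v x ∨ z = -1 ∨ x = 1 ∨ x = -1) :
    (x, z) ∈ frontier (Omega v) := by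
  rw [frontier, (isOpen_Omega hv).interior_eq]
  refine ⟨mem_closure_Omega hv hv1 hx hz, ?_⟩
  intro hmem
  obtain ⟨h1, h2⟩ := hmem
  rcases hbd with h | h | h | h
  · exact absurd h2.2 (by rw [h]; exact lt_irrefl _)
  · exact absurd h2.1 (by rw [h]; exact lt_irrefl _)
  · exact absurd h1.2 (by rw [h]; exact lt_irrefl _)
  · exact absurd h1.1 (by rw [h]; exact lt_irrefl _)

lemma integral_Omega {v : ℝ → ℝ} (hv : Continuous v)
    (hv1 : ∀ x ∈ Icc (-1:ℝ) 1, -1 < v x)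
    {G : ℝ × ℝ → ℝ} (hG : Continuous G) :
    ∫ p in Omega v, G p = ∫ x in (-1:ℝ)..1, ∫ z in (-1:ℝ)..(v x), G (x, z) := by
  -- a bound for v on [-1, 1]
  obtain ⟨R, hR⟩ := (isCompact_Icc : IsCompact (Icc (-1:ℝ) 1)).exists_bound_of_continuousOn
    hv.continuousOn
  have hsub : Omega v ⊆ Icc (-1:ℝ) 1 ×ˢ Icc (-1:ℝ) (R + 1) := by
    rintro ⟨x, z⟩ ⟨h1, h2⟩
    have hRx := hR x (Ioo_subset_Icc_self h1)
    rw [Real.norm_eq_abs] at hRx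
    exact ⟨Ioo_subset_Icc_self h1,
      ⟨h2.1.le, by linarith [h2.2, (abs_le.1 hRx).2]⟩⟩
  have hOmeas : MeasurableSet (Omega v) := (isOpen_Omega hv).measurableSet
  have hGint : IntegrableOn G (Omega v) := by
    apply (hG.continuousOn.integrableOn_compact (isCompact_Icc.prod isCompact_Icc)).mono_set hsub
  -- to indicator and product measure
  have h1 : ∫ p in Omega v, G p = ∫ p : ℝ × ℝ, (Omega v).indicator G p := by
    rw [MeasureTheory.integral_indicator hOmeas]
  rw [h1]
  have hind : Integrable ((Omega v).indicator G) := by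
    rwa [integrable_indicator_iff hOmeas]
  rw [show (volume : Measure (ℝ × ℝ)) = (volume : Measure ℝ).prod volume from
    (Measure.volume_eq_prod ℝ ℝ), MeasureTheory.integral_prod _ (by
      rwa [show (volume : Measure ℝ).prod volume = (volume : Measure (ℝ × ℝ)) from
        (Measure.volume_eq_prod ℝ ℝ).symm])]
  -- identify the inner integrals
  have hinner : ∀ x : ℝ, (∫ z : ℝ, (Omega v).indicator G (x, z)) =
      (Ioo (-1:ℝ) 1).indicator (fun x => ∫ z in Ioo (-1:ℝ) (v x), G (x, z)) x := by
    intro x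
    by_cases hx : x ∈ Ioo (-1:ℝ) 1
    · rw [indicator_of_mem hx]
      have : (fun z => (Omega v).indicator G (x, z)) =
          (Ioo (-1:ℝ) (v x)).indicator (fun z => G (x, z)) := by
        funext z
        by_cases hz : z ∈ Ioo (-1:ℝ) (v x)
        · rw [indicator_of_mem hz, indicator_of_mem (show (x,z) ∈ Omega v from ⟨hx, hz⟩)]
        · rw [indicator_of_notMem hz, indicator_of_notMem (fun hmem => hz hmem.2)]
      rw [this, MeasureTheory.integral_indicator measurableSet_Ioo]
    · have : (fun z => (Omega v).indicator G (x, z)) = fun _ => 0 := by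
        funext z
        exact indicator_of_notMem (fun hmem => hx hmem.1) _
      rw [indicator_of_notMem hx, this, MeasureTheory.integral_zero]
  simp only [hinner]
  rw [MeasureTheory.integral_indicator measurableSet_Ioo]
  rw [intervalIntegral.integral_of_le (by norm_num : (-1:ℝ) ≤ 1),
    ← integral_Ioc_eq_integral_Ioo]
  apply setIntegral_congr_fun measurableSet_Ioc
  intro x hx
  have hxIcc : x ∈ Icc (-1:ℝ) 1 := ⟨hx.1.le, hx.2⟩
  show (∫ z in Ioo (-1:ℝ) (v x), G (x, z)) = ∫ z in (-1:ℝ)..(v x), G (x, z)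
  rw [intervalIntegral.integral_of_le (by linarith [hv1 x hxIcc] : (-1:ℝ) ≤ v x),
    ← integral_Ioc_eq_integral_Ioo]

/-- Directional derivative of a function on `ℝ³`. -/
noncomputable def Pd (F : ℝ × ℝ × ℝ → ℝ) (w : ℝ × ℝ × ℝ) (q : ℝ × ℝ × ℝ) : ℝ :=
  fderiv ℝ F q w

lemma contDiff_Pd {F : ℝ × ℝ × ℝ → ℝ} (hF : ContDiff ℝ 2 F) (w : ℝ × ℝ × ℝ) :
    ContDiff ℝ 1 (Pd F w) := by
  have h1 : ContDiff ℝ 1 (fderiv ℝ F) := hF.fderiv_right (by norm_num)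
  exact (ContinuousLinearMap.apply ℝ ℝ w).contDiff.comp h1

lemma hasDerivAt_comp_path {G : ℝ × ℝ × ℝ → ℝ} (hG : Differentiable ℝ G)
    {γ : ℝ → ℝ × ℝ × ℝ} {γ' : ℝ × ℝ × ℝ} {t : ℝ} (hγ : HasDerivAt γ γ' t) :
    HasDerivAt (fun s => G (γ s)) (fderiv ℝ G (γ t) γ') t := by
  exact (hG (γ t)).hasFDerivAt.comp_hasDerivAt t hγ

lemma path13 {a : ℝ → ℝ} {a' t : ℝ} (x : ℝ) (ha : HasDerivAt a a' t) :
    HasDerivAt (fun s => ((s, x, a s) : ℝ × ℝ × ℝ)) (1, 0, a') t :=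
  (hasDerivAt_id t).prodMk ((hasDerivAt_const t x).prodMk ha)

lemma path23 (t : ℝ) {u : ℝ → ℝ} {u' x : ℝ} (hu : HasDerivAt u u' x) :
    HasDerivAt (fun x' => ((t, x', u x') : ℝ × ℝ × ℝ)) (0, 1, u') x :=
  (hasDerivAt_const x t).prodMk ((hasDerivAt_id x).prodMk hu)

lemma path2 (t z x : ℝ) :
    HasDerivAt (fun x' => ((t, x', z) : ℝ × ℝ × ℝ)) (0, 1, 0) x :=
  (hasDerivAt_const x t).prodMk ((hasDerivAt_id x).prodMk (hasDerivAt_const x z))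

lemma path3 (t x z : ℝ) :
    HasDerivAt (fun z' => ((t, x, z') : ℝ × ℝ × ℝ)) (0, 0, 1) z :=
  (hasDerivAt_const z t).prodMk ((hasDerivAt_const z x).prodMk (hasDerivAt_id z))

lemma fderiv_Pd_eq {F : ℝ × ℝ × ℝ → ℝ} (hF : ContDiff ℝ 2 F) (q w : ℝ × ℝ × ℝ) :
    fderiv ℝ (Pd F w) q
      = (ContinuousLinearMap.apply ℝ ℝ w).comp (fderiv ℝ (fderiv ℝ F) q) := by
  have hfd : ContDiff ℝ 1 (fderiv ℝ F) := hF.fderiv_right (by norm_num)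
  have hd2 : HasFDerivAt (fderiv ℝ F) (fderiv ℝ (fderiv ℝ F) q) q :=
    ((hfd.differentiable one_ne_zero) q).hasFDerivAt
  exact (((ContinuousLinearMap.apply ℝ ℝ w).hasFDerivAt).comp q hd2).fderiv

lemma clairaut {F : ℝ × ℝ × ℝ → ℝ} (hF : ContDiff ℝ 2 F) (q w w' : ℝ × ℝ × ℝ) :
    fderiv ℝ (Pd F w) q w' = fderiv ℝ (Pd F w') q w := by
  have hd1 : Differentiable ℝ F := hF.differentiable (by norm_num)
  have hfd : ContDiff ℝ 1 (fderiv ℝ F) := hF.fderiv_right (by norm_num)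
  have hd2 : HasFDerivAt (fderiv ℝ F) (fderiv ℝ (fderiv ℝ F) q) q :=
    ((hfd.differentiable one_ne_zero) q).hasFDerivAt
  have hsymm := second_derivative_symmetric (fun y => (hd1 y).hasFDerivAt) hd2 w' w
  rw [fderiv_Pd_eq hF q w, fderiv_Pd_eq hF q w']
  simpa using hsymm

lemma continuous_fderiv_Pd {F : ℝ × ℝ × ℝ → ℝ} (hF : ContDiff ℝ 2 F) (w w' : ℝ × ℝ × ℝ) :
    Continuous (fun q => fderiv ℝ (Pd F w) q w') := by
  have h1 : Continuous (fderiv ℝ (Pd F w)) := (contDiff_Pd hF w).continuous_fderiv one_ne_zero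
  exact h1.clm_apply continuous_const


/-- The potential as a function on `ℝ³`. -/
noncomputable def Fpsi (Ψ : ℝ → ℝ → ℝ → ℝ) : ℝ × ℝ × ℝ → ℝ := fun q => Ψ q.1 q.2.1 q.2.2

noncomputable def gfun (ε : ℝ) (Ψ : ℝ → ℝ → ℝ → ℝ) : ℝ × ℝ × ℝ → ℝ := fun q =>
  ε ^ 2 * (Pd (Fpsi Ψ) (0, 1, 0) q) ^ 2 + (Pd (Fpsi Ψ) (0, 0, 1) q) ^ 2

noncomputable def gtfun (ε : ℝ) (Ψ : ℝ → ℝ → ℝ → ℝ) : ℝ × ℝ × ℝ → ℝ := fun q =>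
  2 * ε ^ 2 * Pd (Fpsi Ψ) (0, 1, 0) q * fderiv ℝ (Pd (Fpsi Ψ) (1, 0, 0)) q (0, 1, 0)
    + 2 * Pd (Fpsi Ψ) (0, 0, 1) q * fderiv ℝ (Pd (Fpsi Ψ) (1, 0, 0)) q (0, 0, 1)

noncomputable def Hfun (ε : ℝ) (Ψ : ℝ → ℝ → ℝ → ℝ) (ubar : ℝ → ℝ → ℝ) (t x : ℝ) : ℝ :=
  ∫ z in (-1 : ℝ)..(ubar t x), gfun ε Ψ (t, x, z)

noncomputable def Hd (ε : ℝ) (Ψ : ℝ → ℝ → ℝ → ℝ) (ubar : ℝ → ℝ → ℝ) (t x : ℝ) : ℝ :=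
  gfun ε Ψ (t, x, ubar t x) * deriv (fun σ => ubar σ x) t
    + ∫ z in (-1 : ℝ)..(ubar t x), gtfun ε Ψ (t, x, z)

section psi
variable {Ψ : ℝ → ℝ → ℝ → ℝ} {ε : ℝ}

lemma pdx_eq (hF : ContDiff ℝ 2 (Fpsi Ψ)) (t x z : ℝ) :
    pdx (Ψ t) x z = Pd (Fpsi Ψ) (0, 1, 0) (t, x, z) :=
  (hasDerivAt_comp_path (hF.differentiable (by norm_num)) (path2 t z x)).deriv

lemma pdz_eq (hF : ContDiff ℝ 2 (Fpsi Ψ)) (t x z : ℝ) :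
    pdz (Ψ t) x z = Pd (Fpsi Ψ) (0, 0, 1) (t, x, z) :=
  (hasDerivAt_comp_path (hF.differentiable (by norm_num)) (path3 t x z)).deriv

lemma gfun_cont (hF : ContDiff ℝ 2 (Fpsi Ψ)) : Continuous (gfun ε Ψ) := by
  unfold gfun
  exact ((continuous_const.mul ((contDiff_Pd hF (0,1,0)).continuous.pow 2)).add
    (((contDiff_Pd hF (0,0,1)).continuous.pow 2)))

lemma gtfun_cont (hF : ContDiff ℝ 2 (Fpsi Ψ)) : Continuous (gtfun ε Ψ) := by
  unfold gtfun
  exact (((continuous_const.mul (contDiff_Pd hF (0,1,0)).continuous).mul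
      (continuous_fderiv_Pd hF _ _)).add
    (((continuous_const.mul (contDiff_Pd hF (0,0,1)).continuous)).mul
      (continuous_fderiv_Pd hF _ _)))

lemma path1 (x z t : ℝ) :
    HasDerivAt (fun s => ((s, x, z) : ℝ × ℝ × ℝ)) (1, 0, 0) t :=
  (hasDerivAt_id t).prodMk ((hasDerivAt_const t x).prodMk (hasDerivAt_const t z))

lemma gfun_hasDeriv_t (hF : ContDiff ℝ 2 (Fpsi Ψ)) (x z t : ℝ) :
    HasDerivAt (fun s => gfun ε Ψ (s, x, z)) (gtfun ε Ψ (t, x, z)) t := by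
  have hP2 : HasDerivAt (fun s => Pd (Fpsi Ψ) (0,1,0) (s, x, z))
      (fderiv ℝ (Pd (Fpsi Ψ) (0,1,0)) (t,x,z) (1,0,0)) t :=
    hasDerivAt_comp_path ((contDiff_Pd hF _).differentiable one_ne_zero) (path1 x z t)
  have hP3 : HasDerivAt (fun s => Pd (Fpsi Ψ) (0,0,1) (s, x, z))
      (fderiv ℝ (Pd (Fpsi Ψ) (0,0,1)) (t,x,z) (1,0,0)) t :=
    hasDerivAt_comp_path ((contDiff_Pd hF _).differentiable one_ne_zero) (path1 x z t)
  have h := ((hP2.pow 2).const_mul (ε ^ 2)).add (hP3.pow 2)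
  refine h.congr_deriv ?_
  unfold gtfun
  rw [clairaut hF (t,x,z) (1,0,0) (0,1,0), clairaut hF (t,x,z) (1,0,0) (0,0,1)]
  push_cast
  ring

variable {ubar : ℝ → ℝ → ℝ}

lemma Hfun_cont (hF : ContDiff ℝ 2 (Fpsi Ψ))
    (hc : Continuous fun p : ℝ × ℝ => ubar p.1 p.2) :
    Continuous fun p : ℝ × ℝ => Hfun ε Ψ ubar p.1 p.2 := by
  unfold Hfun
  exact intervalIntegral.continuous_parametric_intervalIntegral_of_continuous
    (f := fun (p : ℝ × ℝ) (z : ℝ) => gfun ε Ψ (p.1, p.2, z))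
    (by exact (gfun_cont hF).comp (by fun_prop)) hc

lemma Hfun_hasDeriv (hF : ContDiff ℝ 2 (Fpsi Ψ))
    (h_t : ∀ x : ℝ, Differentiable ℝ fun s => ubar s x) (t x : ℝ) :
    HasDerivAt (fun s => Hfun ε Ψ ubar s x) (Hd ε Ψ ubar t x) t := by
  unfold Hfun Hd
  exact leibniz_aux
    (f := fun t z => gfun ε Ψ (t, x, z)) (f' := fun t z => gtfun ε Ψ (t, x, z))
    ((gfun_cont hF).comp (by fun_prop)) ((gtfun_cont hF).comp (by fun_prop))
    (fun t z => gfun_hasDeriv_t hF x z t)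
    ((h_t x t).hasDerivAt) (-1)

lemma Hd_cont (hF : ContDiff ℝ 2 (Fpsi Ψ))
    (hc : Continuous fun p : ℝ × ℝ => ubar p.1 p.2)
    (hc_t : Continuous fun p : ℝ × ℝ => deriv (fun s => ubar s p.2) p.1) :
    Continuous fun p : ℝ × ℝ => Hd ε Ψ ubar p.1 p.2 := by
  unfold Hd
  apply Continuous.add
  · exact ((gfun_cont hF).comp (by fun_prop : Continuous fun p : ℝ × ℝ =>
      ((p.1, p.2, ubar p.1 p.2) : ℝ × ℝ × ℝ))).mul hc_t
  · exact intervalIntegral.continuous_parametric_intervalIntegral_of_continuous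
      (f := fun (p : ℝ × ℝ) (z : ℝ) => gtfun ε Ψ (p.1, p.2, z))
      (by exact (gtfun_cont hF).comp (by fun_prop)) hc

noncomputable def Ffun (ε : ℝ) (Ψ : ℝ → ℝ → ℝ → ℝ) (ubar : ℝ → ℝ → ℝ) (t : ℝ) : ℝ :=
  ∫ x in (-1 : ℝ)..1, Hfun ε Ψ ubar t x

lemma Ffun_hasDeriv (hF : ContDiff ℝ 2 (Fpsi Ψ))
    (hc : Continuous fun p : ℝ × ℝ => ubar p.1 p.2)
    (hc_t : Continuous fun p : ℝ × ℝ => deriv (fun s => ubar s p.2) p.1)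
    (h_t : ∀ x : ℝ, Differentiable ℝ fun s => ubar s x) (s₀ : ℝ) :
    HasDerivAt (Ffun ε Ψ ubar) (∫ x in (-1 : ℝ)..1, Hd ε Ψ ubar s₀ x) s₀ := by
  obtain ⟨C, hC⟩ := (isCompact_Icc.prod isCompact_Icc :
      IsCompact (Icc (s₀ - 1) (s₀ + 1) ×ˢ Icc (-1 : ℝ) 1)).exists_bound_of_continuousOn
    (Hd_cont hF hc hc_t).continuousOn
  refine (intervalIntegral.hasDerivAt_integral_of_dominated_loc_of_deriv_le
    (F := fun t x => Hfun ε Ψ ubar t x) (F' := fun t x => Hd ε Ψ ubar t x)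
    (bound := fun _ => C) (Metric.ball_mem_nhds _ one_pos) ?_ ?_ ?_ ?_ ?_ ?_).2
  · exact Filter.Eventually.of_forall fun t =>
      (((Hfun_cont hF hc).comp (Continuous.prodMk_right t)).aestronglyMeasurable).restrict
  · exact (((Hfun_cont hF hc).comp (Continuous.prodMk_right s₀))).intervalIntegrable _ _
  · exact (((Hd_cont hF hc hc_t).comp (Continuous.prodMk_right s₀)).aestronglyMeasurable).restrict
  · refine Filter.Eventually.of_forall fun x hx t ht => ?_
    have hmem : (t, x) ∈ Icc (s₀ - 1) (s₀ + 1) ×ˢ Icc (-1 : ℝ) 1 := by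
      constructor
      · have := Metric.mem_ball.1 ht
        rw [Real.dist_eq] at this
        exact ⟨by linarith [(abs_lt.1 this).1], by linarith [(abs_lt.1 this).2]⟩
      · have : x ∈ Set.Ioc (-1 : ℝ) 1 := by
          rwa [Set.uIoc_of_le (by norm_num : (-1:ℝ) ≤ 1)] at hx
        exact ⟨this.1.le, this.2⟩
    simpa using hC _ hmem
  · exact intervalIntegrable_const
  · exact Filter.Eventually.of_forall fun x _ t _ => Hfun_hasDeriv hF h_t t x

noncomputable def DVx2 (ε : ℝ) (Ψ : ℝ → ℝ → ℝ → ℝ) : ℝ × ℝ × ℝ → ℝ := fun q =>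
  ε ^ 2 * (fderiv ℝ (Pd (Fpsi Ψ) (0, 1, 0)) q (0, 1, 0) * Pd (Fpsi Ψ) (1, 0, 0) q
    + Pd (Fpsi Ψ) (0, 1, 0) q * fderiv ℝ (Pd (Fpsi Ψ) (1, 0, 0)) q (0, 1, 0))

noncomputable def DVz3 (Ψ : ℝ → ℝ → ℝ → ℝ) : ℝ × ℝ × ℝ → ℝ := fun q =>
  fderiv ℝ (Pd (Fpsi Ψ) (0, 0, 1)) q (0, 0, 1) * Pd (Fpsi Ψ) (1, 0, 0) q
    + Pd (Fpsi Ψ) (0, 0, 1) q * fderiv ℝ (Pd (Fpsi Ψ) (1, 0, 0)) q (0, 0, 1)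

lemma DVx2_cont (hF : ContDiff ℝ 2 (Fpsi Ψ)) : Continuous (DVx2 ε Ψ) := by
  unfold DVx2
  exact continuous_const.mul (((continuous_fderiv_Pd hF _ _).mul
    (contDiff_Pd hF _).continuous).add ((contDiff_Pd hF _).continuous.mul
    (continuous_fderiv_Pd hF _ _)))

lemma DVz3_cont {Ψ : ℝ → ℝ → ℝ → ℝ} (hF : ContDiff ℝ 2 (Fpsi Ψ)) : Continuous (DVz3 Ψ) := by
  unfold DVz3
  exact (((continuous_fderiv_Pd hF _ _).mul (contDiff_Pd hF _).continuous).add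
    ((contDiff_Pd hF _).continuous.mul (continuous_fderiv_Pd hF _ _)))

lemma ae_ne (c : ℝ) : ∀ᵐ z : ℝ, z ≠ c := by
  have h1 : (volume : Measure ℝ) {c} = 0 := Real.volume_singleton
  have := MeasureTheory.measure_eq_zero_iff_ae_notMem.mp h1
  filter_upwards [this] with z hz
  simpa using hz

lemma green (ε T : ℝ)
    {ubar : ℝ → ℝ → ℝ} {Ψ : ℝ → ℝ → ℝ → ℝ}
    (hF : ContDiff ℝ 2 (Fpsi Ψ))
    (h_t : ∀ x : ℝ, Differentiable ℝ fun s => ubar s x)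
    (h_x : ∀ t : ℝ, ContDiff ℝ 2 (ubar t))
    (hc : Continuous fun p : ℝ × ℝ => ubar p.1 p.2)
    (hc_t : Continuous fun p : ℝ × ℝ => deriv (fun s => ubar s p.2) p.1)
    (hc_x : Continuous fun p : ℝ × ℝ => deriv (ubar p.1) p.2)
    (hbc : ∀ t ∈ Icc (0 : ℝ) T,
      ubar t (-1) = 0 ∧ ubar t 1 = 0 ∧ deriv (ubar t) (-1) = 0 ∧ deriv (ubar t) 1 = 0)
    (hgt : ∀ t ∈ Icc (0 : ℝ) T, ∀ x ∈ Icc (-1 : ℝ) 1, -1 < ubar t x)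
    (hΨ_pde : ∀ t ∈ Icc (0 : ℝ) T, ∀ p ∈ Omega (ubar t),
      ε ^ 2 * pdx (fun x z => pdx (Ψ t) x z) p.1 p.2
        + pdz (fun x z => pdz (Ψ t) x z) p.1 p.2 = 0)
    (hΨ_bc : ∀ t ∈ Icc (0 : ℝ) T, ∀ p ∈ frontier (Omega (ubar t)),
      Ψ t p.1 p.2 = (1 + p.2) / (1 + ubar t p.1))
    {s₀ : ℝ} (hs₀ : s₀ ∈ Ioo (0 : ℝ) T) :
    ∫ x in (-1 : ℝ)..1, Hd ε Ψ ubar s₀ x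
      = - ∫ x in (-1 : ℝ)..1,
          gfun ε Ψ (s₀, x, ubar s₀ x) * deriv (fun σ => ubar σ x) s₀ := by
  have hs₀Icc : s₀ ∈ Icc (0 : ℝ) T := ⟨hs₀.1.le, hs₀.2.le⟩
  have hFdiff : Differentiable ℝ (Fpsi Ψ) := hF.differentiable (by norm_num)
  have hP1d : Differentiable ℝ (Pd (Fpsi Ψ) (1,0,0)) :=
    (contDiff_Pd hF _).differentiable one_ne_zero
  have hP2d : Differentiable ℝ (Pd (Fpsi Ψ) (0,1,0)) :=
    (contDiff_Pd hF _).differentiable one_ne_zero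
  have hP3d : Differentiable ℝ (Pd (Fpsi Ψ) (0,0,1)) :=
    (contDiff_Pd hF _).differentiable one_ne_zero
  have hu_cont : ∀ s, Continuous (ubar s) := fun s => (h_x s).continuous
  have hu_diff : ∀ s, Differentiable ℝ (ubar s) :=
    fun s => (h_x s).differentiable (by norm_num)
  have hnhds : Ioo (0 : ℝ) T ∈ nhds s₀ := isOpen_Ioo.mem_nhds hs₀
  -- boundary values
  have hfront_top : ∀ s ∈ Icc (0:ℝ) T, ∀ x ∈ Icc (-1:ℝ) 1, Fpsi Ψ (s, x, ubar s x) = 1 := by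
    intro s hs x hx
    have h1 := hΨ_bc s hs (x, ubar s x) (mem_frontier_Omega (hu_cont s) (hgt s hs) hx
      ⟨(hgt s hs x hx).le, le_rfl⟩ (Or.inl rfl))
    show Ψ s x (ubar s x) = 1
    rw [h1]
    exact div_self (by linarith [hgt s hs x hx])
  have hfront_bot : ∀ s ∈ Icc (0:ℝ) T, ∀ x ∈ Icc (-1:ℝ) 1, Fpsi Ψ (s, x, -1) = 0 := by
    intro s hs x hx
    have h1 := hΨ_bc s hs (x, -1) (mem_frontier_Omega (hu_cont s) (hgt s hs) hx
      ⟨le_rfl, (hgt s hs x hx).le⟩ (Or.inr (Or.inl rfl)))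
    show Ψ s x (-1) = 0
    rw [h1]; norm_num
  have hfront_wall : ∀ s ∈ Icc (0:ℝ) T, ∀ x₀ : ℝ, (x₀ = 1 ∨ x₀ = -1) →
      ∀ z ∈ Icc (-1:ℝ) 0, Fpsi Ψ (s, x₀, z) = 1 + z := by
    intro s hs x₀ hx₀ z hz
    have hu0 : ubar s x₀ = 0 := by
      rcases hx₀ with h | h <;> subst h
      · exact (hbc s hs).2.1
      · exact (hbc s hs).1
    have hx₀Icc : x₀ ∈ Icc (-1:ℝ) 1 := by
      rcases hx₀ with h | h <;> subst h <;> norm_num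
    have hzI : z ∈ Icc (-1) (ubar s x₀) := by rw [hu0]; exact hz
    have h1 := hΨ_bc s hs (x₀, z) (mem_frontier_Omega (hu_cont s) (hgt s hs) hx₀Icc hzI
      (by rcases hx₀ with h | h
          · exact Or.inr (Or.inr (Or.inl h))
          · exact Or.inr (Or.inr (Or.inr h))))
    show Ψ s x₀ z = 1 + z
    rw [h1, hu0]; norm_num
  -- derivative identities on the boundary
  have htop_t : ∀ x ∈ Icc (-1:ℝ) 1,
      Pd (Fpsi Ψ) (1,0,0) (s₀, x, ubar s₀ x)
        = - Pd (Fpsi Ψ) (0,0,1) (s₀, x, ubar s₀ x) * deriv (fun σ => ubar σ x) s₀ := by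
    intro x hx
    have hD := hasDerivAt_comp_path hFdiff (path13 x ((h_t x) s₀).hasDerivAt)
    have hconst : deriv (fun s => Fpsi Ψ (s, x, ubar s x)) s₀ = 0 := by
      have hev : (fun s => Fpsi Ψ (s, x, ubar s x)) =ᶠ[nhds s₀] fun _ => 1 :=
        Filter.eventuallyEq_of_mem hnhds
          (fun s hs => hfront_top s ⟨hs.1.le, hs.2.le⟩ x hx)
      rw [hev.deriv_eq]; exact deriv_const _ _
    have hval := hD.deriv
    rw [hconst] at hval
    have hsplit : (fderiv ℝ (Fpsi Ψ) (s₀, x, ubar s₀ x))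
        ((1 : ℝ), (0 : ℝ), deriv (fun σ => ubar σ x) s₀)
        = Pd (Fpsi Ψ) (1,0,0) (s₀, x, ubar s₀ x)
          + deriv (fun σ => ubar σ x) s₀ * Pd (Fpsi Ψ) (0,0,1) (s₀, x, ubar s₀ x) := by
      have hvec : ((1:ℝ), (0:ℝ), deriv (fun σ => ubar σ x) s₀)
          = ((1:ℝ),(0:ℝ),(0:ℝ)) + deriv (fun σ => ubar σ x) s₀ • ((0:ℝ),(0:ℝ),(1:ℝ)) := by
        simp [Prod.ext_iff]
      rw [hvec, map_add, ContinuousLinearMap.map_smul]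
      simp [Pd, smul_eq_mul]
    rw [hsplit] at hval
    have h3 := hval.symm
    nlinarith [h3]
  have hbot : ∀ x ∈ Icc (-1:ℝ) 1, Pd (Fpsi Ψ) (1,0,0) (s₀, x, -1) = 0 := by
    intro x hx
    have hD := hasDerivAt_comp_path hFdiff (path1 x (-1) s₀)
    have hconst : deriv (fun s => Fpsi Ψ (s, x, -1)) s₀ = 0 := by
      have hev : (fun s => Fpsi Ψ (s, x, -1)) =ᶠ[nhds s₀] fun _ => 0 :=
        Filter.eventuallyEq_of_mem hnhds
          (fun s hs => hfront_bot s ⟨hs.1.le, hs.2.le⟩ x hx)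
      rw [hev.deriv_eq]; exact deriv_const _ _
    have hval := hD.deriv
    rw [hconst] at hval
    exact hval.symm
  have hwall : ∀ x₀ : ℝ, (x₀ = 1 ∨ x₀ = -1) → ∀ z ∈ Icc (-1:ℝ) 0,
      Pd (Fpsi Ψ) (1,0,0) (s₀, x₀, z) = 0 := by
    intro x₀ hx₀ z hz
    have hD := hasDerivAt_comp_path hFdiff (path1 x₀ z s₀)
    have hconst : deriv (fun s => Fpsi Ψ (s, x₀, z)) s₀ = 0 := by
      have hev : (fun s => Fpsi Ψ (s, x₀, z)) =ᶠ[nhds s₀] fun _ => 1 + z :=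
        Filter.eventuallyEq_of_mem hnhds
          (fun s hs => hfront_wall s ⟨hs.1.le, hs.2.le⟩ x₀ hx₀ z hz)
      rw [hev.deriv_eq]; exact deriv_const _ _
    have hval := hD.deriv
    rw [hconst] at hval
    exact hval.symm
  have htop_x : ∀ x ∈ Ioo (-1:ℝ) 1,
      Pd (Fpsi Ψ) (0,1,0) (s₀, x, ubar s₀ x)
        = - Pd (Fpsi Ψ) (0,0,1) (s₀, x, ubar s₀ x) * deriv (ubar s₀) x := by
    intro x hx
    have hD := hasDerivAt_comp_path hFdiff (path23 s₀ ((hu_diff s₀) x).hasDerivAt)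
    have hconst : deriv (fun x' => Fpsi Ψ (s₀, x', ubar s₀ x')) x = 0 := by
      have hev : (fun x' => Fpsi Ψ (s₀, x', ubar s₀ x')) =ᶠ[nhds x] fun _ => 1 :=
        Filter.eventuallyEq_of_mem (isOpen_Ioo.mem_nhds hx)
          (fun x' hx' => hfront_top s₀ hs₀Icc x' (Ioo_subset_Icc_self hx'))
      rw [hev.deriv_eq]; exact deriv_const _ _
    have hval := hD.deriv
    rw [hconst] at hval
    have hsplit : (fderiv ℝ (Fpsi Ψ) (s₀, x, ubar s₀ x))
        ((0 : ℝ), (1 : ℝ), deriv (ubar s₀) x)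
        = Pd (Fpsi Ψ) (0,1,0) (s₀, x, ubar s₀ x)
          + deriv (ubar s₀) x * Pd (Fpsi Ψ) (0,0,1) (s₀, x, ubar s₀ x) := by
      have hvec : ((0:ℝ), (1:ℝ), deriv (ubar s₀) x)
          = ((0:ℝ),(1:ℝ),(0:ℝ)) + deriv (ubar s₀) x • ((0:ℝ),(0:ℝ),(1:ℝ)) := by
        simp [Prod.ext_iff]
      rw [hvec, map_add, ContinuousLinearMap.map_smul]
      simp [Pd, smul_eq_mul]
    rw [hsplit] at hval
    have h3 := hval.symm
    nlinarith [h3]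
  -- the PDE, rephrased
  have hpde : ∀ x z : ℝ, (x, z) ∈ Omega (ubar s₀) →
      ε ^ 2 * fderiv ℝ (Pd (Fpsi Ψ) (0,1,0)) (s₀,x,z) (0,1,0)
        + fderiv ℝ (Pd (Fpsi Ψ) (0,0,1)) (s₀,x,z) (0,0,1) = 0 := by
    intro x z hmem
    have h0 := hΨ_pde s₀ hs₀Icc (x, z) hmem
    have hx2 : pdx (fun a b => pdx (Ψ s₀) a b) x z
        = fderiv ℝ (Pd (Fpsi Ψ) (0,1,0)) (s₀,x,z) (0,1,0) := by
      have he : (fun x' => pdx (Ψ s₀) x' z)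
          = fun x' => Pd (Fpsi Ψ) (0,1,0) (s₀, x', z) :=
        funext fun x' => pdx_eq hF s₀ x' z
      show deriv (fun x' => pdx (Ψ s₀) x' z) x = _
      rw [he]
      exact (hasDerivAt_comp_path (hP2d) (path2 s₀ z x)).deriv
    have hz2 : pdz (fun a b => pdz (Ψ s₀) a b) x z
        = fderiv ℝ (Pd (Fpsi Ψ) (0,0,1)) (s₀,x,z) (0,0,1) := by
      have he : (fun z' => pdz (Ψ s₀) x z')
          = fun z' => Pd (Fpsi Ψ) (0,0,1) (s₀, x, z') :=
        funext fun z' => pdz_eq hF s₀ x z'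
      show deriv (fun z' => pdz (Ψ s₀) x z') z = _
      rw [he]
      exact (hasDerivAt_comp_path (hP3d) (path3 s₀ x z)).deriv
    rw [hx2, hz2] at h0
    exact h0
  -- continuity helpers at fixed s₀
  have htopmap : Continuous fun x : ℝ => ((s₀, x, ubar s₀ x) : ℝ × ℝ × ℝ) :=
    continuous_const.prodMk (continuous_id.prodMk (hu_cont s₀))
  have hut_cont : Continuous fun x : ℝ => deriv (fun σ => ubar σ x) s₀ :=
    hc_t.comp (Continuous.prodMk_right s₀)
  have hux_cont : Continuous fun x : ℝ => deriv (ubar s₀) x :=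
    hc_x.comp (Continuous.prodMk_right s₀)
  have hxzmap : Continuous fun p : ℝ × ℝ => ((s₀, p.1, p.2) : ℝ × ℝ × ℝ) := by fun_prop
  have hA2cont : Continuous fun x => ∫ z in (-1:ℝ)..(ubar s₀ x), DVx2 ε Ψ (s₀, x, z) :=
    intervalIntegral.continuous_parametric_intervalIntegral_of_continuous
      (f := fun (x : ℝ) (z : ℝ) => DVx2 ε Ψ (s₀, x, z))
      (by exact (DVx2_cont hF).comp hxzmap) (hu_cont s₀)
  have hA3cont : Continuous fun x => ∫ z in (-1:ℝ)..(ubar s₀ x), DVz3 Ψ (s₀, x, z) :=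
    intervalIntegral.continuous_parametric_intervalIntegral_of_continuous
      (f := fun (x : ℝ) (z : ℝ) => DVz3 Ψ (s₀, x, z))
      (by exact (DVz3_cont hF).comp hxzmap) (hu_cont s₀)
  have hJcont : Continuous fun x => ∫ z in (-1:ℝ)..(ubar s₀ x), gtfun ε Ψ (s₀, x, z) :=
    intervalIntegral.continuous_parametric_intervalIntegral_of_continuous
      (f := fun (x : ℝ) (z : ℝ) => gtfun ε Ψ (s₀, x, z))
      (by exact (gtfun_cont hF).comp hxzmap) (hu_cont s₀)
  -- split of the inner integral using the PDE
  have hgt_split : ∀ x ∈ Ioo (-1:ℝ) 1,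
      (∫ z in (-1:ℝ)..(ubar s₀ x), gtfun ε Ψ (s₀, x, z))
        = 2 * (∫ z in (-1:ℝ)..(ubar s₀ x), DVx2 ε Ψ (s₀, x, z))
          + 2 * (∫ z in (-1:ℝ)..(ubar s₀ x), DVz3 Ψ (s₀, x, z)) := by
    intro x hx
    have hle : (-1:ℝ) ≤ ubar s₀ x := (hgt s₀ hs₀Icc x (Ioo_subset_Icc_self hx)).le
    have h1 : (∫ z in (-1:ℝ)..(ubar s₀ x), gtfun ε Ψ (s₀, x, z))
        = ∫ z in (-1:ℝ)..(ubar s₀ x),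
            (2 * DVx2 ε Ψ (s₀, x, z) + 2 * DVz3 Ψ (s₀, x, z)) := by
      rw [intervalIntegral.integral_of_le hle, intervalIntegral.integral_of_le hle]
      apply setIntegral_congr_ae measurableSet_Ioc
      filter_upwards [ae_ne (ubar s₀ x)] with z hzne hzI
      have hmem : (x, z) ∈ Omega (ubar s₀) := ⟨hx, hzI.1, lt_of_le_of_ne hzI.2 hzne⟩
      have hp := hpde x z hmem
      unfold gtfun DVx2 DVz3
      linear_combination (-2 * Pd (Fpsi Ψ) (1,0,0) (s₀,x,z)) * hp
    have hzmap : Continuous fun z : ℝ => ((s₀, x, z) : ℝ × ℝ × ℝ) := by fun_prop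
    have hi1 : IntervalIntegrable (fun z : ℝ => 2 * DVx2 ε Ψ (s₀, x, z))
        volume (-1) (ubar s₀ x) := by
      apply Continuous.intervalIntegrable
      exact continuous_const.mul ((DVx2_cont hF).comp hzmap)
    have hi2 : IntervalIntegrable (fun z : ℝ => 2 * DVz3 Ψ (s₀, x, z))
        volume (-1) (ubar s₀ x) := by
      apply Continuous.intervalIntegrable
      exact continuous_const.mul ((DVz3_cont hF).comp hzmap)
    rw [h1, intervalIntegral.integral_add hi1 hi2,
      intervalIntegral.integral_const_mul, intervalIntegral.integral_const_mul]
  -- evaluation of the z-part by FTC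
  have hA3 : ∀ x ∈ Icc (-1:ℝ) 1,
      (∫ z in (-1:ℝ)..(ubar s₀ x), DVz3 Ψ (s₀, x, z))
        = - Pd (Fpsi Ψ) (0,0,1) (s₀, x, ubar s₀ x) ^ 2 * deriv (fun σ => ubar σ x) s₀ := by
    intro x hx
    have hderiv : ∀ z ∈ uIcc (-1:ℝ) (ubar s₀ x), HasDerivAt
        (fun z' => Pd (Fpsi Ψ) (0,0,1) (s₀, x, z') * Pd (Fpsi Ψ) (1,0,0) (s₀, x, z'))
        (DVz3 Ψ (s₀, x, z)) z := by
      intro z _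
      exact (hasDerivAt_comp_path hP3d (path3 s₀ x z)).mul
        (hasDerivAt_comp_path hP1d (path3 s₀ x z))
    have hint : IntervalIntegrable (fun z => DVz3 Ψ (s₀, x, z)) volume (-1) (ubar s₀ x) :=
      ((DVz3_cont hF).comp (by fun_prop :
        Continuous fun z : ℝ => ((s₀, x, z) : ℝ × ℝ × ℝ))).intervalIntegrable _ _
    rw [intervalIntegral.integral_eq_sub_of_hasDerivAt hderiv hint,
      hbot x hx, htop_t x hx]
    ring
  -- the x-part: Leibniz + FTC
  have hWd : ∀ x : ℝ, HasDerivAt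
      (fun x' => ∫ z in (-1:ℝ)..(ubar s₀ x'),
        ε^2 * (Pd (Fpsi Ψ) (0,1,0) (s₀,x',z) * Pd (Fpsi Ψ) (1,0,0) (s₀,x',z)))
      (ε^2 * (Pd (Fpsi Ψ) (0,1,0) (s₀,x,ubar s₀ x) * Pd (Fpsi Ψ) (1,0,0) (s₀,x,ubar s₀ x))
          * deriv (ubar s₀) x
        + ∫ z in (-1:ℝ)..(ubar s₀ x), DVx2 ε Ψ (s₀,x,z)) x := by
    intro x
    refine leibniz_aux
      (f := fun x' z => ε^2 * (Pd (Fpsi Ψ) (0,1,0) (s₀,x',z) * Pd (Fpsi Ψ) (1,0,0) (s₀,x',z)))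
      (f' := fun x' z => DVx2 ε Ψ (s₀,x',z)) ?_ ?_ ?_ ((hu_diff s₀ x).hasDerivAt) (-1)
    · exact continuous_const.mul (((contDiff_Pd hF _).continuous.comp hxzmap).mul
        ((contDiff_Pd hF _).continuous.comp hxzmap))
    · exact (DVx2_cont hF).comp hxzmap
    · intro x' z
      have h2 := hasDerivAt_comp_path hP2d (path2 s₀ z x')
      have h1 := hasDerivAt_comp_path hP1d (path2 s₀ z x')
      exact (h2.mul h1).const_mul (ε^2)
  have hWend : ∀ x₀ : ℝ, (x₀ = 1 ∨ x₀ = -1) →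
      (∫ z in (-1:ℝ)..(ubar s₀ x₀),
        ε^2 * (Pd (Fpsi Ψ) (0,1,0) (s₀,x₀,z) * Pd (Fpsi Ψ) (1,0,0) (s₀,x₀,z))) = 0 := by
    intro x₀ hx₀
    have hu0 : ubar s₀ x₀ = 0 := by
      rcases hx₀ with h | h <;> subst h
      · exact (hbc s₀ hs₀Icc).2.1
      · exact (hbc s₀ hs₀Icc).1
    rw [hu0]
    have heq : EqOn
        (fun z => ε^2 * (Pd (Fpsi Ψ) (0,1,0) (s₀,x₀,z) * Pd (Fpsi Ψ) (1,0,0) (s₀,x₀,z)))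
        (fun _ => (0:ℝ)) (uIcc (-1:ℝ) 0) := by
      intro z hz
      have hzIcc : z ∈ Icc (-1:ℝ) 0 := by
        rwa [uIcc_of_le (by norm_num : (-1:ℝ) ≤ 0)] at hz
      have h0 := hwall x₀ hx₀ z hzIcc
      show ε^2 * (Pd (Fpsi Ψ) (0,1,0) (s₀,x₀,z) * Pd (Fpsi Ψ) (1,0,0) (s₀,x₀,z)) = 0
      rw [h0]; ring
    rw [intervalIntegral.integral_congr heq]
    simp
  have hWd_cont : Continuous fun x =>
      ε^2 * (Pd (Fpsi Ψ) (0,1,0) (s₀,x,ubar s₀ x) * Pd (Fpsi Ψ) (1,0,0) (s₀,x,ubar s₀ x))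
          * deriv (ubar s₀) x
        + ∫ z in (-1:ℝ)..(ubar s₀ x), DVx2 ε Ψ (s₀,x,z) :=
    (((continuous_const.mul (((contDiff_Pd hF _).continuous.comp htopmap).mul
      ((contDiff_Pd hF _).continuous.comp htopmap))).mul hux_cont)).add hA2cont
  have hFTCx : (∫ x in (-1:ℝ)..1,
      (ε^2 * (Pd (Fpsi Ψ) (0,1,0) (s₀,x,ubar s₀ x) * Pd (Fpsi Ψ) (1,0,0) (s₀,x,ubar s₀ x))
          * deriv (ubar s₀) x
        + ∫ z in (-1:ℝ)..(ubar s₀ x), DVx2 ε Ψ (s₀,x,z))) = 0 := by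
    rw [intervalIntegral.integral_eq_sub_of_hasDerivAt (fun x _ => hWd x)
      (hWd_cont.intervalIntegrable _ _)]
    rw [hWend 1 (Or.inl rfl), hWend (-1) (Or.inr rfl)]
    ring
  have hintA2 : (∫ x in (-1:ℝ)..1, ∫ z in (-1:ℝ)..(ubar s₀ x), DVx2 ε Ψ (s₀,x,z))
      = - ∫ x in (-1:ℝ)..1,
          ε^2 * (Pd (Fpsi Ψ) (0,1,0) (s₀,x,ubar s₀ x) * Pd (Fpsi Ψ) (1,0,0) (s₀,x,ubar s₀ x))
            * deriv (ubar s₀) x := by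
    have hi3 : IntervalIntegrable (fun x : ℝ =>
        ε^2 * (Pd (Fpsi Ψ) (0,1,0) (s₀,x,ubar s₀ x) * Pd (Fpsi Ψ) (1,0,0) (s₀,x,ubar s₀ x))
          * deriv (ubar s₀) x) volume (-1) 1 := by
      apply Continuous.intervalIntegrable
      exact ((continuous_const.mul (((contDiff_Pd hF _).continuous.comp htopmap).mul
        ((contDiff_Pd hF _).continuous.comp htopmap))).mul hux_cont)
    rw [intervalIntegral.integral_add hi3 (hA2cont.intervalIntegrable _ _)] at hFTCx
    linarith
  have hintA2' : (∫ x in (-1:ℝ)..1, ∫ z in (-1:ℝ)..(ubar s₀ x), DVx2 ε Ψ (s₀,x,z))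
      = - ∫ x in (-1:ℝ)..1,
          ε^2 * Pd (Fpsi Ψ) (0,1,0) (s₀,x,ubar s₀ x) ^ 2 * deriv (fun σ => ubar σ x) s₀ := by
    rw [hintA2]
    congr 1
    rw [intervalIntegral.integral_of_le (by norm_num : (-1:ℝ) ≤ 1),
      intervalIntegral.integral_of_le (by norm_num : (-1:ℝ) ≤ 1)]
    apply setIntegral_congr_ae measurableSet_Ioc
    filter_upwards [ae_ne (1:ℝ)] with x hxne hxI
    have hxIoo : x ∈ Ioo (-1:ℝ) 1 := ⟨hxI.1, lt_of_le_of_ne hxI.2 hxne⟩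
    rw [htop_t x (Ioo_subset_Icc_self hxIoo), htop_x x hxIoo]
    ring
  -- final assembly
  have hgut_cont : Continuous fun x =>
      gfun ε Ψ (s₀, x, ubar s₀ x) * deriv (fun σ => ubar σ x) s₀ :=
    ((gfun_cont hF).comp htopmap).mul hut_cont
  have hS1cont : Continuous fun x : ℝ =>
      ε^2 * Pd (Fpsi Ψ) (0,1,0) (s₀,x,ubar s₀ x) ^ 2 * deriv (fun σ => ubar σ x) s₀ :=
    ((continuous_const.mul (((contDiff_Pd hF _).continuous.comp htopmap).pow 2)).mul hut_cont)
  have hS2cont : Continuous fun x : ℝ =>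
      Pd (Fpsi Ψ) (0,0,1) (s₀,x,ubar s₀ x) ^ 2 * deriv (fun σ => ubar σ x) s₀ :=
    ((((contDiff_Pd hF _).continuous.comp htopmap).pow 2).mul hut_cont)
  have hSsum : (∫ x in (-1:ℝ)..1, gfun ε Ψ (s₀, x, ubar s₀ x) * deriv (fun σ => ubar σ x) s₀)
      = (∫ x in (-1:ℝ)..1,
          ε^2 * Pd (Fpsi Ψ) (0,1,0) (s₀,x,ubar s₀ x) ^ 2 * deriv (fun σ => ubar σ x) s₀)
        + ∫ x in (-1:ℝ)..1,
          Pd (Fpsi Ψ) (0,0,1) (s₀,x,ubar s₀ x) ^ 2 * deriv (fun σ => ubar σ x) s₀ := by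
    rw [← intervalIntegral.integral_add (hS1cont.intervalIntegrable _ _)
      (hS2cont.intervalIntegrable _ _)]
    apply intervalIntegral.integral_congr
    intro x _
    unfold gfun
    ring
  have hJint : (∫ x in (-1:ℝ)..1, ∫ z in (-1:ℝ)..(ubar s₀ x), gtfun ε Ψ (s₀,x,z))
      = 2 * (∫ x in (-1:ℝ)..1, ∫ z in (-1:ℝ)..(ubar s₀ x), DVx2 ε Ψ (s₀,x,z))
        + 2 * ∫ x in (-1:ℝ)..1, ∫ z in (-1:ℝ)..(ubar s₀ x), DVz3 Ψ (s₀,x,z) := by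
    have h1 : (∫ x in (-1:ℝ)..1, ∫ z in (-1:ℝ)..(ubar s₀ x), gtfun ε Ψ (s₀,x,z))
        = ∫ x in (-1:ℝ)..1,
            (2 * (∫ z in (-1:ℝ)..(ubar s₀ x), DVx2 ε Ψ (s₀,x,z))
              + 2 * ∫ z in (-1:ℝ)..(ubar s₀ x), DVz3 Ψ (s₀,x,z)) := by
      rw [intervalIntegral.integral_of_le (by norm_num : (-1:ℝ) ≤ 1),
        intervalIntegral.integral_of_le (by norm_num : (-1:ℝ) ≤ 1)]
      apply setIntegral_congr_ae measurableSet_Ioc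
      filter_upwards [ae_ne (1:ℝ)] with x hxne hxI
      exact hgt_split x ⟨hxI.1, lt_of_le_of_ne hxI.2 hxne⟩
    rw [h1, intervalIntegral.integral_add
      ((by exact continuous_const.mul hA2cont : Continuous fun x =>
        2 * ∫ z in (-1:ℝ)..(ubar s₀ x), DVx2 ε Ψ (s₀,x,z)).intervalIntegrable _ _)
      ((by exact continuous_const.mul hA3cont : Continuous fun x =>
        2 * ∫ z in (-1:ℝ)..(ubar s₀ x), DVz3 Ψ (s₀,x,z)).intervalIntegrable _ _),
      intervalIntegral.integral_const_mul, intervalIntegral.integral_const_mul]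
  have hA3int : (∫ x in (-1:ℝ)..1, ∫ z in (-1:ℝ)..(ubar s₀ x), DVz3 Ψ (s₀,x,z))
      = - ∫ x in (-1:ℝ)..1,
          Pd (Fpsi Ψ) (0,0,1) (s₀,x,ubar s₀ x) ^ 2 * deriv (fun σ => ubar σ x) s₀ := by
    rw [← intervalIntegral.integral_neg]
    apply intervalIntegral.integral_congr
    intro x hx
    have hxIcc : x ∈ Icc (-1:ℝ) 1 := by
      rwa [uIcc_of_le (by norm_num : (-1:ℝ) ≤ 1)] at hx
    show (∫ z in (-1:ℝ)..(ubar s₀ x), DVz3 Ψ (s₀,x,z))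
      = -(Pd (Fpsi Ψ) (0,0,1) (s₀,x,ubar s₀ x) ^ 2 * deriv (fun σ => ubar σ x) s₀)
    rw [hA3 x hxIcc]
    ring
  have hHd_split : (∫ x in (-1:ℝ)..1, Hd ε Ψ ubar s₀ x)
      = (∫ x in (-1:ℝ)..1, gfun ε Ψ (s₀, x, ubar s₀ x) * deriv (fun σ => ubar σ x) s₀)
        + ∫ x in (-1:ℝ)..1, ∫ z in (-1:ℝ)..(ubar s₀ x), gtfun ε Ψ (s₀,x,z) := by
    rw [← intervalIntegral.integral_add (hgut_cont.intervalIntegrable _ _)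
      (hJcont.intervalIntegrable _ _)]
    rfl
  rw [hHd_split, hJint, hintA2', hA3int, hSsum]
  ring

lemma Ee_eq {Ψ : ℝ → ℝ → ℝ → ℝ} {ubar : ℝ → ℝ → ℝ} {ε : ℝ}
    (hF : ContDiff ℝ 2 (Fpsi Ψ)) (t : ℝ) (hucont : Continuous (ubar t))
    (hv1 : ∀ x ∈ Icc (-1:ℝ) 1, -1 < ubar t x) :
    (∫ p in Omega (ubar t),
      (ε ^ 2 * (pdx (Ψ t) p.1 p.2) ^ 2 + (pdz (Ψ t) p.1 p.2) ^ 2))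
      = Ffun ε Ψ ubar t := by
  have hG : Continuous fun p : ℝ × ℝ => gfun ε Ψ (t, p.1, p.2) :=
    (gfun_cont hF).comp (by fun_prop)
  have h0 := integral_Omega hucont hv1 hG
  unfold Ffun Hfun
  simp only [pdx_eq hF, pdz_eq hF]
  exact h0

lemma Ffun_cont {Ψ : ℝ → ℝ → ℝ → ℝ} {ubar : ℝ → ℝ → ℝ} {ε : ℝ}
    (hF : ContDiff ℝ 2 (Fpsi Ψ))
    (hc : Continuous fun p : ℝ × ℝ => ubar p.1 p.2) :
    Continuous (Ffun ε Ψ ubar) := by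
  unfold Ffun
  exact intervalIntegral.continuous_parametric_intervalIntegral_of_continuous'
    (f := fun t x => Hfun ε Ψ ubar t x) (by exact Hfun_cont hF hc) (-1) 1

end psi


/-- Shape derivative formula for the electrostatic energy on the
moving domain `Ω(ū(t,·))`. -/
theorem stmt_13
    (ε T : ℝ) (hε : 0 < ε) (hT : 0 < T)
    (ubar : ℝ → ℝ → ℝ)
    -- existence of ∂t ū, ∂x ū, ∂x² ū mixed smoothness
    (h_t : ∀ x : ℝ, Differentiable ℝ fun s => ubar s x)
    (h_x : ∀ t : ℝ, ContDiff ℝ 2 (ubar t))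
    (h_tx : ∀ x : ℝ, Differentiable ℝ fun s => deriv (ubar s) x)
    -- joint continuity of ū, ∂t ū, ∂x ū, ∂x² ū, ∂t ∂x ū
    (hc : Continuous fun p : ℝ × ℝ => ubar p.1 p.2)
    (hc_t : Continuous fun p : ℝ × ℝ => deriv (fun s => ubar s p.2) p.1)
    (hc_x : Continuous fun p : ℝ × ℝ => deriv (ubar p.1) p.2)
    (hc_xx : Continuous fun p : ℝ × ℝ => iteratedDeriv 2 (ubar p.1) p.2)
    (hc_tx : Continuous fun p : ℝ × ℝ => deriv (fun s => deriv (ubar s) p.2) p.1)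
    -- clamped boundary conditions and lower bound
    (hbc : ∀ t ∈ Icc (0 : ℝ) T,
      ubar t (-1) = 0 ∧ ubar t 1 = 0 ∧ deriv (ubar t) (-1) = 0 ∧ deriv (ubar t) 1 = 0)
    (hgt : ∀ t ∈ Icc (0 : ℝ) T, ∀ x ∈ Icc (-1 : ℝ) 1, -1 < ubar t x)
    -- the potential, C² on a neighborhood of the moving domain
    (Ψ : ℝ → ℝ → ℝ → ℝ)
    (hΨ : ContDiff ℝ 2 fun q : ℝ × ℝ × ℝ => Ψ q.1 q.2.1 q.2.2)
    (hΨ_pde : ∀ t ∈ Icc (0 : ℝ) T, ∀ p ∈ Omega (ubar t),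
      ε ^ 2 * pdx (fun x z => pdx (Ψ t) x z) p.1 p.2
        + pdz (fun x z => pdz (Ψ t) x z) p.1 p.2 = 0)
    (hΨ_bc : ∀ t ∈ Icc (0 : ℝ) T, ∀ p ∈ frontier (Omega (ubar t)),
      Ψ t p.1 p.2 = (1 + p.2) / (1 + ubar t p.1)) :
    ∀ t₁ t₂ : ℝ, 0 ≤ t₁ → t₁ ≤ t₂ → t₂ ≤ T →
      Ee ε (ubar t₂) (Ψ t₂) - Ee ε (ubar t₁) (Ψ t₁) =
        - ∫ s in t₁..t₂, ∫ x in (-1 : ℝ)..1,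
            (ε ^ 2 * (pdx (Ψ s) x (ubar s x)) ^ 2
              + (pdz (Ψ s) x (ubar s x)) ^ 2) * deriv (fun σ => ubar σ x) s := by
  intro t₁ t₂ ht₁ h₁₂ ht₂
  have hF : ContDiff ℝ 2 (Fpsi Ψ) := hΨ
  have hinner : ∀ s : ℝ, (∫ x in (-1:ℝ)..1,
      (ε ^ 2 * (pdx (Ψ s) x (ubar s x)) ^ 2
        + (pdz (Ψ s) x (ubar s x)) ^ 2) * deriv (fun σ => ubar σ x) s)
      = ∫ x in (-1:ℝ)..1, gfun ε Ψ (s, x, ubar s x) * deriv (fun σ => ubar σ x) s := by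
    intro s
    apply intervalIntegral.integral_congr
    intro x _
    show (ε ^ 2 * (pdx (Ψ s) x (ubar s x)) ^ 2
        + (pdz (Ψ s) x (ubar s x)) ^ 2) * deriv (fun σ => ubar σ x) s
      = gfun ε Ψ (s, x, ubar s x) * deriv (fun σ => ubar σ x) s
    rw [pdx_eq hF, pdz_eq hF]
    rfl
  rcases eq_or_lt_of_le h₁₂ with heq | hlt
  · subst heq
    simp
  · have key : (∫ s in t₁..t₂,
        (- ∫ x in (-1:ℝ)..1, gfun ε Ψ (s, x, ubar s x) * deriv (fun σ => ubar σ x) s))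
        = Ffun ε Ψ ubar t₂ - Ffun ε Ψ ubar t₁ := by
      apply intervalIntegral.integral_eq_sub_of_hasDeriv_right_of_le hlt.le
      · exact (Ffun_cont hF hc).continuousOn
      · intro s hs
        have hs' : s ∈ Ioo (0:ℝ) T := ⟨lt_of_le_of_lt ht₁ hs.1, lt_of_lt_of_le hs.2 ht₂⟩
        have h1 := Ffun_hasDeriv (ε := ε) hF hc hc_t h_t s
        rw [green ε T hF h_t h_x hc hc_t hc_x hbc hgt hΨ_pde hΨ_bc hs'] at h1
        exact h1.hasDerivWithinAt
      · apply Continuous.intervalIntegrable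
        apply Continuous.neg
        have hgu : Continuous fun p : ℝ × ℝ =>
            gfun ε Ψ (p.1, p.2, ubar p.1 p.2) * deriv (fun s => ubar s p.2) p.1 := by
          refine Continuous.mul ?_ hc_t
          exact (gfun_cont hF).comp
            (continuous_fst.prodMk (continuous_snd.prodMk hc))
        exact intervalIntegral.continuous_parametric_intervalIntegral_of_continuous'
          (f := fun s x => gfun ε Ψ (s, x, ubar s x) * deriv (fun σ => ubar σ x) s)
          (by exact hgu) (-1) 1
    have hE1 : Ee ε (ubar t₁) (Ψ t₁) = Ffun ε Ψ ubar t₁ :=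
      Ee_eq hF t₁ ((h_x t₁).continuous) (hgt t₁ ⟨ht₁, le_trans h₁₂ ht₂⟩)
    have hE2 : Ee ε (ubar t₂) (Ψ t₂) = Ffun ε Ψ ubar t₂ :=
      Ee_eq hF t₂ ((h_x t₂).continuous) (hgt t₂ ⟨le_trans ht₁ h₁₂, ht₂⟩)
    rw [hE1, hE2, ← key]
    simp only [hinner]
    rw [intervalIntegral.integral_neg]
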